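/- The constant e admits the infinite product representation e = ∏_{n=1}^{∞} (1 - 1/τ^n)^{(μ(n) - φ(n))/n}, where τ = (1 + √5)/2 is the golden ratio. -/

import Mathlib

open Filter Real Finset

namespace GoldenAux

/-- The double-indexed term of the expanded logarithm series. -/
noncomputable def g (x : ℝ) (p : ℕ × ℕ) : ℝ :=
  ((ArithmeticFunction.moebius p.1 : ℝ) - (Nat.totient p.1 : ℝ)) * x ^ (p.1 * p.2) /
    ((p.1 * p.2 : ℕ) : ℝ)

lemma g_zero_left (x : ℝ) (k : ℕ) : g x (0, k) = 0 := by
  simp [g]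

lemma g_zero_right (x : ℝ) (n : ℕ) : g x (n, 0) = 0 := by
  simp [g]

lemma g_bound {x : ℝ} (hx0 : 0 < x) (hx1 : x < 1) (p : ℕ × ℕ) :
    ‖g x p‖ ≤ 2 / x * (x ^ p.1 * x ^ p.2) := by
  obtain ⟨n, k⟩ := p
  have hb : (0:ℝ) ≤ 2 / x * (x ^ n * x ^ k) := by positivity
  rcases Nat.eq_zero_or_pos n with rfl | hn
  · simpa [g] using hb
  rcases Nat.eq_zero_or_pos k with rfl | hk
  · simpa [g] using hb
  have hc : |(ArithmeticFunction.moebius n : ℝ) - (Nat.totient n : ℝ)| ≤ 2 * n := by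
    have h1 : |(ArithmeticFunction.moebius n : ℤ)| ≤ 1 := by
      rw [ArithmeticFunction.abs_moebius]
      split <;> norm_num
    have h2 : (Nat.totient n : ℝ) ≤ n := by exact_mod_cast Nat.totient_le n
    have h1' : |(ArithmeticFunction.moebius n : ℝ)| ≤ 1 := by exact_mod_cast h1
    have hn1 : (1:ℝ) ≤ n := by exact_mod_cast hn
    have := abs_sub (ArithmeticFunction.moebius n : ℝ) (Nat.totient n : ℝ)
    calc |(ArithmeticFunction.moebius n : ℝ) - (Nat.totient n : ℝ)|
        ≤ |(ArithmeticFunction.moebius n : ℝ)| + |(Nat.totient n : ℝ)| := abs_sub _ _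
      _ ≤ 1 + n := by
          have : |(Nat.totient n : ℝ)| = (Nat.totient n : ℝ) := abs_of_nonneg (by positivity)
          rw [this]; linarith
      _ ≤ 2 * n := by linarith
  have hnk : n + k - 1 ≤ n * k := by
    have h3 : n + k ≤ n * k + 1 := by
      have h1' : (1:ℤ) ≤ n := by exact_mod_cast hn
      have h2' : (1:ℤ) ≤ k := by exact_mod_cast hk
      have := mul_nonneg (sub_nonneg.mpr h1') (sub_nonneg.mpr h2')
      zify
      nlinarith
    omega
  have hxnk : x ^ (n * k) ≤ x ^ (n + k - 1) :=
    pow_le_pow_of_le_one hx0.le hx1.le hnk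
  have hnk0 : (0:ℝ) < ((n * k : ℕ) : ℝ) := by
    have : 0 < n * k := Nat.mul_pos hn hk
    exact_mod_cast this
  have habs : ‖g x (n, k)‖ =
      |(ArithmeticFunction.moebius n : ℝ) - (Nat.totient n : ℝ)| * x ^ (n * k) /
        ((n * k : ℕ) : ℝ) := by
    simp only [g]
    rw [Real.norm_eq_abs, abs_div, abs_mul, abs_of_nonneg (pow_nonneg hx0.le _), abs_of_pos hnk0]
  rw [habs, div_le_iff₀ hnk0]
  have hsplit : x ^ (n + k - 1) * x = x ^ n * x ^ k := by
    rw [← pow_succ, ← pow_add]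
    congr 1
    omega
  have hx' : (0:ℝ) < x ^ (n + k - 1) := pow_pos hx0 _
  have key : |(ArithmeticFunction.moebius n : ℝ) - (Nat.totient n : ℝ)| * x ^ (n * k)
      ≤ 2 * n * x ^ (n + k - 1) :=
    mul_le_mul hc hxnk (pow_nonneg hx0.le _) (by positivity)
  have hle : (n:ℝ) ≤ ((n*k : ℕ):ℝ) := by
    have : n ≤ n * k := Nat.le_mul_of_pos_right n hk
    exact_mod_cast this
  calc |(ArithmeticFunction.moebius n : ℝ) - (Nat.totient n : ℝ)| * x ^ (n * k)
      ≤ 2 * n * x ^ (n + k - 1) := key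
    _ ≤ 2 * ((n*k : ℕ):ℝ) * x ^ (n + k - 1) := by
        apply mul_le_mul_of_nonneg_right _ hx'.le
        nlinarith
    _ = 2 / x * (x ^ n * x ^ k) * ((n*k:ℕ):ℝ) := by
        rw [← hsplit]; field_simp


lemma summable_g {x : ℝ} (hx0 : 0 < x) (hx1 : x < 1) : Summable (g x) := by
  apply Summable.of_norm_bounded _ (g_bound hx0 hx1)
  exact (((summable_geometric_of_lt_one hx0.le hx1).mul_of_nonneg
    (summable_geometric_of_lt_one hx0.le hx1) (fun n => pow_nonneg hx0.le n)
    (fun n => pow_nonneg hx0.le n))).mul_left _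

/-- The fiberwise sums of `g` over the multiplication map. -/
lemma fiber_sum {x : ℝ} (hx0 : 0 < x) (hx1 : x < 1) (m : ℕ) :
    ∑' (p : (fun p : ℕ × ℕ => p.1 * p.2) ⁻¹' {m}), g x p =
      (if m = 1 then x else 0) - x ^ m + (if m = 0 then 1 else 0) := by
  rcases eq_or_ne m 0 with rfl | hm
  · have hz : ∀ p : (fun p : ℕ × ℕ => p.1 * p.2) ⁻¹' {(0:ℕ)}, g x p = 0 := by
      rintro ⟨⟨n, k⟩, hp⟩
      simp only [Set.mem_preimage, Set.mem_singleton_iff] at hp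
      rcases Nat.mul_eq_zero.mp hp with rfl | rfl
      · exact g_zero_left x k
      · exact g_zero_right x n
    rw [tsum_congr hz]
    simp
  · rw [show (fun p : ℕ × ℕ => p.1 * p.2) ⁻¹' {m} = ↑(m.divisorsAntidiagonal) by
        ext p; simp [Nat.mem_divisorsAntidiagonal, hm]]
    rw [Finset.tsum_subtype' (m.divisorsAntidiagonal) (g x)]
    have hm0 : (0:ℝ) < (m:ℝ) := by exact_mod_cast Nat.pos_of_ne_zero hm
    have hstep : ∀ p ∈ m.divisorsAntidiagonal,
        g x p = ((ArithmeticFunction.moebius p.1 : ℝ) - (Nat.totient p.1 : ℝ)) * (x ^ m / m) := by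
      intro p hp
      have h := (Nat.mem_divisorsAntidiagonal.mp hp).1
      rw [g, h, mul_div_assoc]
    rw [Finset.sum_congr rfl hstep, ← Finset.sum_mul]
    have hdiv : ∑ p ∈ m.divisorsAntidiagonal,
        ((ArithmeticFunction.moebius p.1 : ℝ) - (Nat.totient p.1 : ℝ))
        = (if m = 1 then (1:ℝ) else 0) - m := by
      rw [Nat.sum_divisorsAntidiagonal
        (fun i j => ((ArithmeticFunction.moebius i : ℝ) - (Nat.totient i : ℝ)))]
      rw [Finset.sum_sub_distrib]
      have h1 : ∑ d ∈ m.divisors, (ArithmeticFunction.moebius d : ℝ)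
          = (if m = 1 then (1:ℝ) else 0) := by
        have := ArithmeticFunction.coe_mul_zeta_apply
          (f := ArithmeticFunction.moebius) (x := m)
        rw [ArithmeticFunction.moebius_mul_coe_zeta] at this
        have h2 : ∑ d ∈ m.divisors, ArithmeticFunction.moebius d
            = (if m = 1 then (1:ℤ) else 0) := by
          rw [← this, ArithmeticFunction.one_apply]
        calc ∑ d ∈ m.divisors, (ArithmeticFunction.moebius d : ℝ)
            = ((∑ d ∈ m.divisors, ArithmeticFunction.moebius d : ℤ) : ℝ) := by push_cast; ring
          _ = _ := by rw [h2]; split <;> norm_num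
      have h2 : ∑ d ∈ m.divisors, (Nat.totient d : ℝ) = (m : ℝ) := by
        calc ∑ d ∈ m.divisors, (Nat.totient d : ℝ)
            = ((∑ d ∈ m.divisors, Nat.totient d : ℕ) : ℝ) := by push_cast; ring
          _ = (m:ℝ) := by rw [Nat.sum_totient]
      rw [h1, h2]
    rw [hdiv]
    rcases eq_or_ne m 1 with rfl | hm1
    · norm_num
    · simp only [if_neg hm1, if_neg hm]
      field_simp
      ring

/-- The total sum of `g`. -/
lemma hasSum_g {x : ℝ} (hx0 : 0 < x) (hx1 : x < 1) :
    HasSum (g x) (x - (1 - x)⁻¹ + 1) := by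
  have hs := summable_g hx0 hx1
  have h1 := hs.hasSum.tsum_fiberwise (fun p : ℕ × ℕ => p.1 * p.2)
  have h2 : HasSum (fun m : ℕ => (if m = 1 then x else 0) - x ^ m + (if m = 0 then (1:ℝ) else 0))
      (∑' p, g x p) := by
    simpa only [fiber_sum hx0 hx1] using h1
  have h3 : HasSum (fun m : ℕ => (if m = 1 then x else 0) - x ^ m + (if m = 0 then (1:ℝ) else 0))
      (x - (1 - x)⁻¹ + 1) :=
    ((hasSum_ite_eq 1 x).sub (hasSum_geometric_of_lt_one hx0.le hx1)).add (hasSum_ite_eq 0 1)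
  have := h2.unique h3
  rw [← this]
  exact hs.hasSum


lemma inner_hasSum {x : ℝ} (hx0 : 0 < x) (hx1 : x < 1) (n : ℕ) :
    HasSum (fun k => g x (n, k))
      (-(((ArithmeticFunction.moebius n : ℝ) - (Nat.totient n : ℝ)) / n *
        Real.log (1 - x ^ n))) := by
  rcases Nat.eq_zero_or_pos n with rfl | hn
  · simpa [g_zero_left] using hasSum_zero
  · have hn0 : (n:ℝ) ≠ 0 := by positivity
    have hxn : |x ^ n| < 1 := by
      rw [abs_of_nonneg (pow_nonneg hx0.le n)]
      exact pow_lt_one₀ hx0.le hx1 (by omega)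
    have h := (hasSum_pow_div_log_of_abs_lt_one hxn).mul_left
      (((ArithmeticFunction.moebius n : ℝ) - (Nat.totient n : ℝ)) / n)
    have heq : ∀ k : ℕ,
        ((ArithmeticFunction.moebius n : ℝ) - (Nat.totient n : ℝ)) / n *
          ((x ^ n) ^ (k + 1) / (k + 1)) = g x (n, k + 1) := by
      intro k
      rw [g, ← pow_mul]
      have : ((n * (k+1) : ℕ) : ℝ) = (n : ℝ) * ((k:ℝ) + 1) := by push_cast; ring
      rw [this]
      have hk0 : ((k:ℝ) + 1) ≠ 0 := by positivity
      field_simp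
    have h' : HasSum (fun k : ℕ => g x (n, k + 1))
        (((ArithmeticFunction.moebius n : ℝ) - (Nat.totient n : ℝ)) / n *
          -Real.log (1 - x ^ n)) := by
      exact HasSum.congr_fun h (fun k => (heq k).symm)
    have h'' : HasSum (fun k : ℕ => g x (n, k))
        (((ArithmeticFunction.moebius n : ℝ) - (Nat.totient n : ℝ)) / n *
          -Real.log (1 - x ^ n)) := by
      refine (hasSum_nat_add_iff' 1).mp ?_
      simpa [g_zero_right] using h'
    rw [mul_neg] at h''
    exact h''

lemma hasSum_h {x : ℝ} (hx0 : 0 < x) (hx1 : x < 1) :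
    HasSum (fun n : ℕ => ((ArithmeticFunction.moebius n : ℝ) - (Nat.totient n : ℝ)) / n *
      Real.log (1 - x ^ n)) (-(x - (1 - x)⁻¹ + 1)) := by
  have h := (hasSum_g hx0 hx1).prod_fiberwise (fun n => inner_hasSum hx0 hx1 n)
  simpa using h.neg

end GoldenAux

open Filter Real

/-- e = ∏_{n=1}^∞ (1 - 1/τ^n)^((μ(n) - φ(n))/n), where τ = (1+√5)/2. -/
theorem golden_product_for_e :
    Filter.Tendsto
      (fun N : ℕ => ∏ n ∈ Finset.Icc 1 N,
        (1 - 1 / ((1 + Real.sqrt 5) / 2) ^ n) ^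
          (((ArithmeticFunction.moebius n : ℝ) - (Nat.totient n : ℝ)) / (n : ℝ)))
      Filter.atTop (nhds (Real.exp 1)) := by
  set τ : ℝ := (1 + Real.sqrt 5) / 2 with hτ
  have hs5 : Real.sqrt 5 ^ 2 = 5 := Real.sq_sqrt (by norm_num)
  have hs5' : (0:ℝ) ≤ Real.sqrt 5 := Real.sqrt_nonneg 5
  have hs2 : (2:ℝ) < Real.sqrt 5 := by nlinarith
  have hτ1 : (1:ℝ) < τ := by rw [hτ]; nlinarith
  have hτ0 : (0:ℝ) < τ := by linarith
  set x : ℝ := 1 / τ with hx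
  have hx0 : 0 < x := by positivity
  have hx1 : x < 1 := by rw [hx, div_lt_one hτ0]; linarith
  have h1x : (1:ℝ) - x ≠ 0 := by nlinarith
  have hval : -(x - (1 - x)⁻¹ + 1) = 1 := by
    have hxx : x ^ 2 + x = 1 := by
      rw [hx, hτ]
      rw [div_pow, div_add_div _ _ (by positivity) (by positivity)]
      rw [div_eq_one_iff_eq (by positivity)]
      ring_nf
      nlinarith
    field_simp
    nlinarith
  have hsum := GoldenAux.hasSum_h hx0 hx1
  rw [hval] at hsum
  have htend := hsum.tendsto_sum_nat
  have htend2 : Tendsto (fun N : ℕ => ∑ n ∈ Finset.range (N+1),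
      ((ArithmeticFunction.moebius n : ℝ) - (Nat.totient n : ℝ)) / n * Real.log (1 - x ^ n))
      atTop (nhds 1) := htend.comp (tendsto_add_atTop_nat 1)
  have hexp := (Real.continuous_exp.tendsto 1).comp htend2
  refine hexp.congr ?_
  intro N
  have hIcc : ∑ n ∈ Finset.Icc 1 N,
      ((ArithmeticFunction.moebius n : ℝ) - (Nat.totient n : ℝ)) / n * Real.log (1 - x ^ n)
      = ∑ n ∈ Finset.range (N+1),
      ((ArithmeticFunction.moebius n : ℝ) - (Nat.totient n : ℝ)) / n * Real.log (1 - x ^ n) := by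
    rw [show Finset.range (N+1) = insert 0 (Finset.Icc 1 N) from by
      ext a; simp only [Finset.mem_range, Finset.mem_insert, Finset.mem_Icc]; omega]
    rw [Finset.sum_insert (by simp)]
    simp
  show Real.exp (∑ n ∈ Finset.range (N+1),
      ((ArithmeticFunction.moebius n : ℝ) - (Nat.totient n : ℝ)) / n * Real.log (1 - x ^ n)) = _
  rw [← hIcc, Real.exp_sum]
  apply Finset.prod_congr rfl
  intro n hn
  have hn1 : 1 ≤ n := (Finset.mem_Icc.mp hn).1
  have hxe : (1:ℝ) / τ ^ n = x ^ n := by rw [hx, ← one_div_pow]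
  have hxn1 : x ^ n < 1 := pow_lt_one₀ hx0.le hx1 (by omega)
  have hb : 0 < 1 - 1 / τ ^ n := by rw [hxe]; linarith
  rw [Real.rpow_def_of_pos hb, hxe]
  ring_nf
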